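/- Let G be a locally compact group and (H_i)_{i∈I} a family of closed subgroups of G such that each coset space H_i\G admits a non-zero G-invariant measure. Let (σ_i, 𝒦_i) be a unitary representation of H_i for each i. If the trivial representation 1_G is weakly contained in the direct sum ⊕_{i∈I} Ind_{H_i}^G σ_i, then 1_G is weakly contained in ⊕_{i∈I} λ_{H_i\G}, where λ_{H_i\G} is the quasi-regular representation of G on L²(H_i\G). -/

import Mathlib

open MeasureTheory Filter ENNReal

noncomputable section

/-- **Lemma (generalized Herz majoration principle).**  Let `G` be a locally compact group
and `(H i)_{i ∈ I}` a family of closed subgroups such that each coset space `Hᵢ\G` admits a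
non-zero `G`-invariant measure.  Each coset space is realized, as in the standard model for
induced representations, by a Borel fundamental domain `X i` with invariant measure `μ i`,
right `G`-action `a i : X i → G → X i` and cocycle `c i : X i → G → H i` (coming from
`x·g = c(x,g)(x ⋅ g)`); the representation induced from a unitary representation
`(σ i, K i)` of `H i` acts on `L²(X i, K i, μ i)` by `(π(g)ξ)(x) = σ(c(x,g)) ξ(x⋅g)`, and
the quasi-regular representation `λ_{Hᵢ\G}` acts on `L²(X i, μ i)` by `(λ(g)φ)(x) = φ(x⋅g)`.
If the trivial representation `1_G` is weakly contained in `⊕ᵢ Ind_{H i}^G σ i` — i.e. for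
every compact `Q ⊆ G` and `ε > 0` there is a `(Q,ε)`-invariant unit vector — then `1_G` is
weakly contained in `⊕ᵢ λ_{Hᵢ\G}`. -/
theorem herz_majoration_principle
    (G : Type*) [Group G] [TopologicalSpace G] [IsTopologicalGroup G] [LocallyCompactSpace G]
    (I : Type*)
    (H : I → Subgroup G) (hHclosed : ∀ i, IsClosed ((H i) : Set G))
    -- Borel fundamental domains for the actions of G on the coset spaces Hᵢ\G,
    -- with non-zero G-invariant measures
    (X : I → Type*) [∀ i, MeasurableSpace (X i)] (μ : ∀ i, Measure (X i))
    (hμ : ∀ i, μ i ≠ 0)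
    (a : ∀ i, X i → G → X i)
    (ha_one : ∀ i x, a i x 1 = x)
    (ha_mul : ∀ i x g h, a i x (g * h) = a i (a i x g) h)
    (ha_mp : ∀ i g, MeasurePreserving (fun x => a i x g) (μ i) (μ i))
    -- the cocycles coming from x g = c(x,g) (x ⋅ g)
    (c : ∀ i, X i → G → H i)
    (hc : ∀ i x g h, c i x (g * h) = c i x g * c i (a i x g) h)
    -- the unitary representations (σ i, K i) of the subgroups H i
    (K : I → Type*) [∀ i, NormedAddCommGroup (K i)] [∀ i, InnerProductSpace ℂ (K i)]
    (σ : ∀ i, (H i) →* ((K i) →L[ℂ] (K i)))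
    (hσ_unitary : ∀ i (h : H i) (ξ : K i), ‖σ i h ξ‖ = ‖ξ‖)
    -- hypothesis: 1_G is weakly contained in ⊕ᵢ Ind_{H i}^G (σ i)
    (hweak : ∀ Q : Set G, IsCompact Q → ∀ ε : ℝ, 0 < ε →
      ∃ ξ : ∀ i, X i → K i,
        (∀ i, MemLp (ξ i) 2 (μ i)) ∧
        (∑' i, (eLpNorm (ξ i) 2 (μ i)) ^ 2) = 1 ∧
        ∀ g ∈ Q, (∑' i,
            (eLpNorm (fun x => σ i (c i x g) (ξ i (a i x g)) - ξ i x) 2 (μ i)) ^ 2) ≤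
          ENNReal.ofReal ε) :
    -- conclusion: 1_G is weakly contained in ⊕ᵢ λ_{Hᵢ\G}
    ∀ Q : Set G, IsCompact Q → ∀ ε : ℝ, 0 < ε →
      ∃ φ : ∀ i, X i → ℂ,
        (∀ i, MemLp (φ i) 2 (μ i)) ∧
        (∑' i, (eLpNorm (φ i) 2 (μ i)) ^ 2) = 1 ∧
        ∀ g ∈ Q, (∑' i,
            (eLpNorm (fun x => φ i (a i x g) - φ i x) 2 (μ i)) ^ 2) ≤
          ENNReal.ofReal ε := by
  intro Q hQ ε hε
  obtain ⟨ξ, hξmem, hξnorm, hξinv⟩ := hweak Q hQ ε hε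
  refine ⟨fun i x => (‖ξ i x‖ : ℂ), ?_, ?_, ?_⟩
  · intro i
    refine ⟨Complex.continuous_ofReal.comp_aestronglyMeasurable
      (hξmem i).aestronglyMeasurable.norm, ?_⟩
    have : eLpNorm (fun x => (‖ξ i x‖ : ℂ)) 2 (μ i) = eLpNorm (ξ i) 2 (μ i) := by
      apply eLpNorm_congr_norm_ae
      filter_upwards with x
      simp
    rw [this]
    exact (hξmem i).2
  · have h : ∀ i, eLpNorm (fun x => (‖ξ i x‖ : ℂ)) 2 (μ i) = eLpNorm (ξ i) 2 (μ i) := by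
      intro i
      apply eLpNorm_congr_norm_ae
      filter_upwards with x
      simp
    simpa only [h] using hξnorm
  · intro g hg
    refine le_trans ?_ (hξinv g hg)
    apply ENNReal.tsum_le_tsum
    intro i
    gcongr
    apply eLpNorm_mono
    intro x
    rw [← Complex.ofReal_sub, Complex.norm_real]
    calc |‖ξ i (a i x g)‖ - ‖ξ i x‖|
        = |‖σ i (c i x g) (ξ i (a i x g))‖ - ‖ξ i x‖| := by
          rw [hσ_unitary]
      _ ≤ ‖σ i (c i x g) (ξ i (a i x g)) - ξ i x‖ := abs_norm_sub_norm_le _ _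

end
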